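/- Let c be a nonnegative integer, p a prime with p > c, and D ⊆ ℤ/pℤ a subset of cardinality n = p − c. Let b ∈ ℤ/pℤ and let k be a positive integer with k ≤ p − 1. Let N be the number of k-tuples (x_1,…,x_k) ∈ D^k with pairwise distinct coordinates such that x_1 + ⋯ + x_k = b. Then N/k! ≥ (1/p)·C(p−c, k) − C(c+k−1, k), i.e. N ≥ (p−c)(p−c−1)⋯(p−c−k+1)/p − (c+k−1)(c+k−2)⋯c. -/

import Mathlib

open Finset

section aux

variable {α : Type*} [Fintype α] [DecidableEq α]

lemma insert_erase_sum (s : Finset α) (g : α → ℂ) (k : ℕ) :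
    ∑ a ∈ s, g a * ∑ S ∈ (s.erase a).powersetCard k, ∏ b ∈ S, g b
      = (k + 1 : ℕ) * ∑ T ∈ s.powersetCard (k + 1), ∏ b ∈ T, g b := by
  simp_rw [Finset.mul_sum]
  rw [← Finset.sum_sigma (s := s) (t := fun a => (s.erase a).powersetCard k)
    (f := fun p => g p.1 * ∏ b ∈ p.2, g b)]
  have hR : ∀ T ∈ s.powersetCard (k+1), ((k + 1 : ℕ) : ℂ) * ∏ b ∈ T, g b
      = ∑ a ∈ T, g a * ∏ b ∈ T.erase a, g b := by
    intro T hT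
    rw [Finset.mem_powersetCard] at hT
    have h1 : ∀ a ∈ T, g a * ∏ b ∈ T.erase a, g b = ∏ b ∈ T, g b := fun a ha =>
      Finset.mul_prod_erase T g ha
    rw [Finset.sum_congr rfl h1, Finset.sum_const, hT.2, nsmul_eq_mul]
  rw [Finset.sum_congr rfl hR,
    ← Finset.sum_sigma (s := s.powersetCard (k+1)) (t := fun T => (T : Finset α))
      (f := fun p => g p.2 * ∏ b ∈ p.1.erase p.2, g b)]
  refine Finset.sum_nbij' (fun p => ⟨insert p.1 p.2, p.1⟩) (fun q => ⟨q.2, q.1.erase q.2⟩)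
    ?_ ?_ ?_ ?_ ?_
  · rintro ⟨a, S⟩ hp
    rw [Finset.mem_sigma, Finset.mem_powersetCard] at hp
    obtain ⟨ha, hS, hcard⟩ := hp
    have haS : a ∉ S := fun h => (Finset.mem_erase.mp (hS h)).1 rfl
    rw [Finset.mem_sigma, Finset.mem_powersetCard]
    refine ⟨⟨Finset.insert_subset ha (hS.trans (Finset.erase_subset _ _)), ?_⟩,
      Finset.mem_insert_self _ _⟩
    rw [Finset.card_insert_of_notMem haS, hcard]
  · rintro ⟨T, a⟩ hq
    rw [Finset.mem_sigma, Finset.mem_powersetCard] at hq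
    obtain ⟨⟨hT, hcard⟩, ha⟩ := hq
    rw [Finset.mem_sigma, Finset.mem_powersetCard]
    refine ⟨hT ha, fun x hx => ?_, ?_⟩
    · rw [Finset.mem_erase] at hx ⊢
      exact ⟨hx.1, hT hx.2⟩
    · rw [Finset.card_erase_of_mem ha, hcard]
      rfl
  · rintro ⟨a, S⟩ hp
    rw [Finset.mem_sigma, Finset.mem_powersetCard] at hp
    have haS : a ∉ S := fun h => (Finset.mem_erase.mp (hp.2.1 h)).1 rfl
    simp [Finset.erase_insert haS]
  · rintro ⟨T, a⟩ hq
    rw [Finset.mem_sigma] at hq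
    simp [Finset.insert_erase hq.2]
  · rintro ⟨a, S⟩ hp
    rw [Finset.mem_sigma, Finset.mem_powersetCard] at hp
    have haS : a ∉ S := fun h => (Finset.mem_erase.mp (hp.2.1 h)).1 rfl
    simp [Finset.erase_insert haS]

lemma sum_prod_injective (g : α → ℂ) :
    ∀ (k : ℕ) (s : Finset α),
      ∑ x ∈ univ.filter (fun x : Fin k → α => (∀ i, x i ∈ s) ∧ Function.Injective x),
        ∏ i, g (x i) = k.factorial * ∑ S ∈ s.powersetCard k, ∏ a ∈ S, g a := by
  intro k
  induction k with
  | zero =>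
    intro s
    simp [Finset.powersetCard_zero, Function.injective_of_subsingleton]
  | succ k ih =>
    intro s
    rw [Finset.sum_filter]
    rw [← Equiv.sum_comp (Fin.consEquiv (fun _ : Fin (k+1) => α)), Fintype.sum_prod_type]
    have hce : ∀ (a : α) (y : Fin k → α),
        (Fin.consEquiv (fun _ : Fin (k+1) => α)) (a, y) = (Fin.cons a y : Fin (k+1) → α) := fun _ _ => rfl
    simp only [hce]
    have hterm : ∀ (a : α) (y : Fin k → α),
        (if ((∀ i, (Fin.cons a y : Fin (k+1) → α) i ∈ s) ∧ Function.Injective (Fin.cons a y : Fin (k+1) → α))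
          then ∏ i, g ((Fin.cons a y : Fin (k+1) → α) i) else 0)
        = if a ∈ s then g a * (if ((∀ i, y i ∈ s.erase a) ∧ Function.Injective y)
            then ∏ i, g (y i) else 0) else 0 := by
      intro a y
      have hcond : ((∀ i, (Fin.cons a y : Fin (k+1) → α) i ∈ s) ∧ Function.Injective (Fin.cons a y : Fin (k+1) → α))
          ↔ (a ∈ s ∧ ((∀ i, y i ∈ s.erase a) ∧ Function.Injective y)) := by
        rw [Fin.forall_fin_succ, Fin.cons_injective_iff]
        simp only [Fin.cons_zero, Fin.cons_succ, Finset.mem_erase, Set.mem_range, not_exists]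
        constructor
        · rintro ⟨⟨ha, hy⟩, hr, hinj⟩
          exact ⟨ha, fun i => ⟨fun h => hr i h, hy i⟩, hinj⟩
        · rintro ⟨ha, hy, hinj⟩
          exact ⟨⟨ha, fun i => (hy i).2⟩, fun i hi => (hy i).1 hi, hinj⟩
      have hprod : ∏ i, g ((Fin.cons a y : Fin (k+1) → α) i) = g a * ∏ i, g (y i) := by
        rw [Fin.prod_univ_succ]
        simp
      rw [if_congr hcond hprod rfl, ite_and, mul_ite, mul_zero]
    simp_rw [hterm]
    simp_rw [Finset.sum_ite_irrel, Finset.sum_const_zero, ← Finset.mul_sum]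
    rw [Finset.sum_ite_mem univ s (fun a => g a * ∑ y : Fin k → α,
        (if ((∀ i, y i ∈ s.erase a) ∧ Function.Injective y) then ∏ i, g (y i) else 0)),
      Finset.univ_inter]
    have hinner : ∀ a ∈ s, (g a * ∑ y : Fin k → α,
        (if ((∀ i, y i ∈ s.erase a) ∧ Function.Injective y) then ∏ i, g (y i) else 0))
        = g a * (k.factorial * ∑ S ∈ (s.erase a).powersetCard k, ∏ b ∈ S, g b) := by
      intro a _
      rw [← Finset.sum_filter, ih (s.erase a)]
    rw [Finset.sum_congr rfl hinner]
    have hfac : ∑ a ∈ s, g a * ((k.factorial : ℂ) * ∑ S ∈ (s.erase a).powersetCard k, ∏ b ∈ S, g b)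
        = (k.factorial : ℂ) * ∑ a ∈ s, g a * ∑ S ∈ (s.erase a).powersetCard k, ∏ b ∈ S, g b := by
      rw [Finset.mul_sum]
      exact Finset.sum_congr rfl fun a _ => by ring
    rw [hfac, insert_erase_sum s g k]
    push_cast [Nat.factorial_succ]
    ring

end aux

open Finset

lemma choose_sum_le (c : ℕ) : ∀ m : ℕ,
    c * ∑ i ∈ range m, (c + i - 1).choose i ≤ m * (c + m - 1).choose m := by
  intro m
  induction m with
  | zero => simp
  | succ m ih =>
    rcases Nat.eq_zero_or_pos c with hc | hc
    · simp [hc]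
    rw [Finset.sum_range_succ, Nat.mul_add]
    have key : (c + m) * (c + m - 1).choose m = (m + 1) * (c + (m+1) - 1).choose (m+1) := by
      have h1 : c + m - 1 + 1 = c + m := by omega
      have h2 : c + (m + 1) - 1 = c + m := by omega
      have h := Nat.add_one_mul_choose_eq (c + m - 1) m
      rw [h1] at h
      rw [h2, h]
      ring
    calc c * ∑ i ∈ range m, (c + i - 1).choose i + c * (c + m - 1).choose m
        ≤ m * (c + m - 1).choose m + c * (c + m - 1).choose m := by
          exact Nat.add_le_add_right ih _
      _ = (c + m) * (c + m - 1).choose m := by ring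
      _ = (m + 1) * (c + (m+1) - 1).choose (m+1) := key

lemma esymm_norm_le {σ : Type*} [Fintype σ] [DecidableEq σ] (c : ℕ) (f : σ → ℂ) :
    ∀ m : ℕ, (∀ j : ℕ, 1 ≤ j → j ≤ m → ‖∑ i, f i ^ j‖ ≤ (c : ℝ)) →
      ‖∑ S ∈ (univ : Finset σ).powersetCard m, ∏ a ∈ S, f a‖ ≤ ((c + m - 1).choose m : ℝ) := by
  intro m
  induction m using Nat.strong_induction_on with
  | _ m ih =>
    intro hP
    match m, ih, hP with
    | 0, _, _ => simp
    | (n+1), ih, hP =>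
      set m := n + 1 with hm
      have hm0 : 0 < m := Nat.succ_pos n
      -- Newton's identity, evaluated
      have hN := congrArg (MvPolynomial.aeval f) (MvPolynomial.mul_esymm_eq_sum σ ℂ m)
      have hesymm : ∀ i : ℕ, MvPolynomial.aeval f (MvPolynomial.esymm σ ℂ i)
          = ∑ S ∈ (univ : Finset σ).powersetCard i, ∏ a ∈ S, f a := by
        intro i
        rw [MvPolynomial.aeval_esymm_eq_multiset_esymm]
        rw [Finset.esymm_map_val]
      have hpsum : ∀ j : ℕ, MvPolynomial.aeval f (MvPolynomial.psum σ ℂ j) = ∑ i, f i ^ j := by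
        intro j
        simp [MvPolynomial.psum, map_sum, map_pow]
      rw [map_mul, map_mul, map_natCast, map_sum] at hN
      simp only [map_mul, map_pow, map_neg, map_one, hesymm, hpsum] at hN
      set E : ℕ → ℂ := fun i => ∑ S ∈ (univ : Finset σ).powersetCard i, ∏ a ∈ S, f a with hE
      set P : ℕ → ℂ := fun j => ∑ i, f i ^ j with hPdef
      -- norm bound on the RHS sum
      have hbound : ‖∑ a ∈ (antidiagonal m).filter (fun a => a.1 < m),
          (-1 : ℂ) ^ a.1 * E a.1 * P a.2‖
          ≤ ∑ a ∈ (antidiagonal m).filter (fun a => a.1 < m),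
            ((c + a.1 - 1).choose a.1 : ℝ) * c := by
        refine (norm_sum_le _ _).trans (Finset.sum_le_sum ?_)
        rintro ⟨i, j⟩ ha
        rw [Finset.mem_filter, Finset.HasAntidiagonal.mem_antidiagonal] at ha
        obtain ⟨hij, hilt⟩ := ha
        have hEi : ‖E i‖ ≤ ((c + i - 1).choose i : ℝ) := by
          refine ih i hilt (fun j' h1 h2 => hP j' h1 (h2.trans hilt.le))
        have hPj : ‖P j‖ ≤ (c : ℝ) := by
          refine hP j ?_ ?_ <;> omega
        calc ‖(-1 : ℂ) ^ i * E i * P j‖ = ‖E i‖ * ‖P j‖ := by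
              rw [norm_mul, norm_mul, norm_pow, norm_neg, norm_one, one_pow, one_mul]
        _ ≤ ((c + i - 1).choose i : ℝ) * c := by
              exact mul_le_mul hEi hPj (norm_nonneg _) (Nat.cast_nonneg _)
      have hsum_eq : ∑ a ∈ (antidiagonal m).filter (fun a => a.1 < m),
          ((c + a.1 - 1).choose a.1 : ℝ) * c = ∑ i ∈ range m, ((c + i - 1).choose i : ℝ) * c := by
        refine Finset.sum_nbij' (fun a => a.1) (fun i => (i, m - i)) ?_ ?_ ?_ ?_ ?_
        · rintro ⟨i, j⟩ ha
          rw [Finset.mem_filter] at ha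
          exact Finset.mem_range.mpr ha.2
        · intro i hi
          rw [Finset.mem_range] at hi
          refine Finset.mem_filter.mpr ⟨Finset.HasAntidiagonal.mem_antidiagonal.mpr ?_, ?_⟩
          · show i + (m - i) = m
            omega
          · show i < m
            exact hi
        · rintro ⟨i, j⟩ ha
          rw [Finset.mem_filter, Finset.HasAntidiagonal.mem_antidiagonal] at ha
          have : m - i = j := by omega
          simp [this]
        · intro i hi
          rfl
        · rintro ⟨i, j⟩ _
          rfl
      -- combine
      have hnorm : (m : ℝ) * ‖E m‖ ≤ ∑ i ∈ range m, ((c + i - 1).choose i : ℝ) * c := by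
        have h1 : ‖(m : ℂ) * E m‖ = (m : ℝ) * ‖E m‖ := by
          rw [norm_mul, Complex.norm_natCast]
        rw [← h1, hN]
        rw [norm_mul, norm_pow, norm_neg, norm_one, one_pow, one_mul]
        rw [← hsum_eq]
        exact hbound
      have hfinal : (m : ℝ) * ‖E m‖ ≤ (m : ℝ) * ((c + m - 1).choose m : ℝ) := by
        refine hnorm.trans ?_
        have := choose_sum_le c m
        calc ∑ i ∈ range m, ((c + i - 1).choose i : ℝ) * c
            = ((c * ∑ i ∈ range m, (c + i - 1).choose i : ℕ) : ℝ) := by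
              push_cast [Finset.mul_sum]
              exact Finset.sum_congr rfl fun i _ => by ring
          _ ≤ ((m * (c + m - 1).choose m : ℕ) : ℝ) := by exact_mod_cast this
          _ = (m : ℝ) * ((c + m - 1).choose m : ℝ) := by push_cast; ring
      have hmpos : (0 : ℝ) < m := by exact_mod_cast hm0
      exact le_of_mul_le_mul_left hfinal hmpos

open Finset

lemma addChar_map_sum {ι A M : Type*} [AddCommMonoid A] [CommMonoid M]
    (ψ : AddChar A M) (s : Finset ι) (f : ι → A) :
    ψ (∑ i ∈ s, f i) = ∏ i ∈ s, ψ (f i) := by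
  induction s using Finset.cons_induction with
  | empty => simp
  | cons a s ha ih => rw [Finset.sum_cons, Finset.prod_cons, AddChar.map_add_eq_mul, ih]

lemma prod_range_eq_factorial_mul_choose (c k : ℕ) :
    ∏ j ∈ range k, (c + j) = k.factorial * (c + k - 1).choose k := by
  rw [← Nat.descFactorial_eq_factorial_mul_choose, Nat.descFactorial_eq_prod_range]
  calc ∏ j ∈ range k, (c + j) = ∏ j ∈ range k, (c + (k - 1 - j)) :=
        (Finset.prod_range_reflect (fun j => c + j) k).symm
    _ = ∏ i ∈ range k, (c + k - 1 - i) := by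
        refine Finset.prod_congr rfl fun i hi => ?_
        rw [Finset.mem_range] at hi
        omega

open Finset

/-- Let `c ≥ 0`, `p > c` a prime and `D ⊆ ℤ/pℤ` with `|D| = p - c`.  If `N` is the
number of `k`-tuples of pairwise distinct elements of `D` summing to `b`, then
`N ≥ (p-c)(p-c-1)⋯(p-c-k+1)/p - (c+k-1)(c+k-2)⋯c`; equivalently
`N/k! ≥ (1/p)·C(p-c, k) - C(c+k-1, k)`. -/
theorem card_distinct_tuples_sum_eq_ge_of_card_eq {c p : ℕ} [hp : Fact p.Prime]
    (hcp : c < p) (D : Finset (ZMod p)) (hD : D.card = p - c)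
    (b : ZMod p) {k : ℕ} (hk : 0 < k) (hkp : k ≤ p - 1) :
    ((Finset.univ.filter (fun x : Fin k → ZMod p =>
        (∀ i, x i ∈ D) ∧ Function.Injective x ∧ ∑ i, x i = b)).card : ℝ) ≥
      (Nat.descFactorial (p - c) k : ℝ) / p -
        ∏ j ∈ Finset.range k, ((c : ℝ) + j) := by
  haveI : NeZero p := ⟨hp.out.ne_zero⟩
  set ψ := ZMod.stdAddChar (N := p) with hψdef
  have hψ1 : ∀ z : ZMod p, ‖ψ z‖ = 1 := fun z => by
    rw [ZMod.stdAddChar_apply]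
    exact Circle.norm_coe _
  set T := Finset.univ.filter (fun x : Fin k → ZMod p =>
      (∀ i, x i ∈ D) ∧ Function.Injective x ∧ ∑ i, x i = b) with hTdef
  set A := Finset.univ.filter (fun x : Fin k → ZMod p =>
      (∀ i, x i ∈ D) ∧ Function.Injective x) with hAdef
  have hTA : T = A.filter (fun x => ∑ i, x i = b) := by
    rw [hTdef, hAdef, Finset.filter_filter]
    ext x
    simp [and_assoc]
  -- cardinality of A
  have hAcard : A.card = Nat.descFactorial (p - c) k := by
    have h := sum_prod_injective (fun _ : ZMod p => (1 : ℂ)) k D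
    simp only [Finset.prod_const_one, Finset.sum_const, nsmul_eq_mul, mul_one] at h
    rw [Finset.card_powersetCard, hD] at h
    rw [← hAdef] at h
    have : A.card = k.factorial * (p - c).choose k := by exact_mod_cast h
    rw [this, Nat.descFactorial_eq_factorial_mul_choose]
  -- orthogonality
  have horth : ∀ a : ZMod p, ∑ t : ZMod p, ψ (t * a) = if a = 0 then (p : ℂ) else 0 := by
    intro a
    have h := AddChar.sum_mulShift a (ZMod.isPrimitive_stdAddChar p)
    rw [ZMod.card] at h
    rw [hψdef, h]
    split_ifs <;> simp
  set F : ZMod p → ℂ := fun t => ∑ x ∈ A, ψ (t * (∑ i, x i - b)) with hFdef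
  -- key identity
  have hkey : (p : ℂ) * T.card = ∑ t : ZMod p, F t := by
    rw [hFdef]
    rw [Finset.sum_comm]
    have h1 : ∀ x ∈ A, ∑ t : ZMod p, ψ (t * (∑ i, x i - b))
        = if ∑ i, x i = b then (p : ℂ) else 0 := by
      intro x _
      rw [horth (∑ i, x i - b)]
      simp [sub_eq_zero]
    rw [Finset.sum_congr rfl h1, ← Finset.sum_filter, ← hTA, Finset.sum_const, nsmul_eq_mul,
      mul_comm]
  have hF0 : F 0 = (A.card : ℂ) := by
    simp [hFdef]
  -- bound on nontrivial terms
  set B : ℕ := k.factorial * (c + k - 1).choose k with hBdef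
  have hFbound : ∀ t : ZMod p, t ≠ 0 → ‖F t‖ ≤ (B : ℝ) := by
    intro t ht
    have hsplit : ∀ x ∈ A, ψ (t * (∑ i, x i - b))
        = ψ (-(t * b)) * ∏ i, ψ (t * x i) := by
      intro x _
      have harg : t * (∑ i, x i - b) = -(t * b) + ∑ i, t * x i := by
        rw [mul_sub, Finset.mul_sum]
        ring
      rw [harg, AddChar.map_add_eq_mul, addChar_map_sum]
    show ‖∑ x ∈ A, ψ (t * (∑ i, x i - b))‖ ≤ (B : ℝ)
    rw [Finset.sum_congr rfl hsplit, ← Finset.mul_sum, norm_mul, hψ1, one_mul]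
    have hcount := sum_prod_injective (fun a : ZMod p => ψ (t * a)) k D
    rw [← hAdef] at hcount
    rw [hcount, norm_mul, Complex.norm_natCast]
    set g := fun a : ZMod p => ψ (t * a) with hgdef
    have hbridge : ∑ S ∈ D.powersetCard k, ∏ a ∈ S, g a
        = ∑ S ∈ (Finset.univ : Finset {a : ZMod p // a ∈ D}).powersetCard k, ∏ a ∈ S, g ↑a := by
      rw [← Finset.esymm_map_val g D k,
        ← Finset.esymm_map_val (fun a : {a : ZMod p // a ∈ D} => g ↑a) Finset.univ k]
      congr 1
      rw [Finset.univ_eq_attach]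
      exact (Multiset.attach_map_val' D.val g).symm
    have hpows : ∀ j : ℕ, 1 ≤ j → j ≤ k →
        ‖∑ a : {a : ZMod p // a ∈ D}, (g ↑a) ^ j‖ ≤ (c : ℝ) := by
      intro j hj1 hjk
      have hsub : ∑ a : {a : ZMod p // a ∈ D}, (g ↑a) ^ j = ∑ a ∈ D, (g a) ^ j := by
        rw [Finset.univ_eq_attach]
        exact Finset.sum_attach D (fun a => (g a) ^ j)
      set u : ZMod p := (j : ZMod p) * t with hudef
      have hu : u ≠ 0 := by
        refine mul_ne_zero ?_ ht
        rw [Ne, ZMod.natCast_eq_zero_iff]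
        intro hdvd
        have hjp : j < p := by omega
        have := Nat.le_of_dvd (by omega) hdvd
        omega
      have hg : ∀ a : ZMod p, (g a) ^ j = ψ (u * a) := by
        intro a
        show (ψ (t * a)) ^ j = ψ (u * a)
        rw [← AddChar.map_nsmul_eq_pow, nsmul_eq_mul, hudef, mul_assoc]
      have hfull : ∑ a : ZMod p, ψ (u * a) = 0 := by
        have h := horth u
        simp_rw [mul_comm u]
        rw [h, if_neg hu]
      have hcompl : ∑ a ∈ D, ψ (u * a) = - ∑ a ∈ Dᶜ, ψ (u * a) := by
        have hadd := Finset.sum_add_sum_compl D (fun a => ψ (u * a))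
        rw [hfull] at hadd
        linear_combination hadd
      rw [hsub]
      simp_rw [hg]
      rw [hcompl, norm_neg]
      have hcard : (Dᶜ.card : ℝ) = c := by
        rw [Finset.card_compl, hD, ZMod.card]
        have : p - (p - c) = c := by omega
        rw [this]
      calc ‖∑ a ∈ Dᶜ, ψ (u * a)‖ ≤ ∑ a ∈ Dᶜ, ‖ψ (u * a)‖ := norm_sum_le _ _
        _ = ∑ a ∈ Dᶜ, (1 : ℝ) := Finset.sum_congr rfl fun a _ => hψ1 _
        _ = (Dᶜ.card : ℝ) := by rw [Finset.sum_const, nsmul_eq_mul, mul_one]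
        _ = c := hcard
    have hesymm := esymm_norm_le c (fun a : {a : ZMod p // a ∈ D} => g ↑a) k hpows
    rw [hbridge]
    calc (k.factorial : ℝ) * ‖∑ S ∈ (Finset.univ : Finset {a : ZMod p // a ∈ D}).powersetCard k,
          ∏ a ∈ S, g ↑a‖
        ≤ (k.factorial : ℝ) * ((c + k - 1).choose k : ℝ) :=
          mul_le_mul_of_nonneg_left hesymm (Nat.cast_nonneg _)
      _ = (B : ℝ) := by rw [hBdef]; push_cast; ring
  -- assemble
  have hsplitsum : ∑ t : ZMod p, F t = F 0 + ∑ t ∈ Finset.univ.erase (0 : ZMod p), F t :=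
    (Finset.add_sum_erase Finset.univ F (Finset.mem_univ 0)).symm
  have hrest : ‖∑ t ∈ Finset.univ.erase (0 : ZMod p), F t‖ ≤ ((p : ℝ) - 1) * B := by
    refine (norm_sum_le _ _).trans ?_
    have hcard : ((Finset.univ.erase (0 : ZMod p)).card : ℝ) = (p : ℝ) - 1 := by
      rw [Finset.card_erase_of_mem (Finset.mem_univ 0), Finset.card_univ, ZMod.card]
      have h1 : (1:ℕ) ≤ p := hp.out.one_lt.le
      push_cast [Nat.cast_sub h1]
      ring
    calc ∑ t ∈ Finset.univ.erase (0 : ZMod p), ‖F t‖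
        ≤ ∑ _t ∈ Finset.univ.erase (0 : ZMod p), (B : ℝ) :=
          Finset.sum_le_sum fun t htm => hFbound t (Finset.mem_erase.mp htm).1
      _ = ((Finset.univ.erase (0 : ZMod p)).card : ℝ) * B := by
          rw [Finset.sum_const, nsmul_eq_mul]
      _ = ((p : ℝ) - 1) * B := by rw [hcard]
  have hRval : ∑ t ∈ Finset.univ.erase (0 : ZMod p), F t
      = (((p : ℝ) * T.card - A.card : ℝ) : ℂ) := by
    have h1 : (p : ℂ) * T.card = (A.card : ℂ) + ∑ t ∈ Finset.univ.erase (0 : ZMod p), F t := by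
      rw [hkey, hsplitsum, hF0]
    push_cast
    linear_combination -h1
  have habs : |(p : ℝ) * T.card - A.card| ≤ ((p : ℝ) - 1) * B := by
    have h := hrest
    rw [hRval, Complex.norm_real] at h
    exact h
  have hB0 : (0 : ℝ) ≤ B := Nat.cast_nonneg _
  have hppos : (0 : ℝ) < p := by exact_mod_cast hp.out.pos
  have hlow : (A.card : ℝ) - (p : ℝ) * B ≤ (p : ℝ) * T.card := by
    have h1 := abs_le.mp habs
    nlinarith [h1.1]
  have hprod : ∏ j ∈ Finset.range k, ((c : ℝ) + j) = (B : ℝ) := by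
    rw [hBdef, ← prod_range_eq_factorial_mul_choose]
    push_cast
    rfl
  rw [ge_iff_le, hprod, sub_le_iff_le_add, div_le_iff₀ hppos]
  have hAr : (A.card : ℝ) = ((p - c).descFactorial k : ℝ) := by rw [hAcard]
  nlinarith [hlow, hAr]
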